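/- arXiv:1408.1597 — 5 statements merged into one kernel-verified Lean document; each statement's English description precedes it below -/
import Mathlib

section
/- Let ℓ be an odd prime with ℓ ≡ −1 (mod 8) and let r be a positive integer not divisible by ℓ, and let n be a nonnegative integer. Then c₃(ℓ²n + rℓ), the number of ordered triples (x, y, z) of positive integers with x² + y² + z² = ℓ²n + rℓ, is even. -/
/-- Key arithmetic lemma: `2x² + z² = ℓ²n + rℓ` is impossible when `ℓ ≡ 7 (mod 8)`
is prime and `ℓ ∤ r`, since `-2` is a non-residue mod `ℓ`. -/
theorem no_two_sq_rep (ℓ : ℕ) (hℓ : ℓ.Prime) (hmod : ℓ % 8 = 7)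
    (r : ℕ) (hndvd : ¬ ℓ ∣ r) (n : ℕ) (x z : ℕ)
    (h : 2 * x ^ 2 + z ^ 2 = ℓ ^ 2 * n + r * ℓ) : False := by
  haveI : Fact ℓ.Prime := ⟨hℓ⟩
  have hne2 : ℓ ≠ 2 := by omega
  have hns : ¬ IsSquare (-2 : ZMod ℓ) := by
    rw [ZMod.exists_sq_eq_neg_two_iff hne2]
    omega
  have hdvdN : ℓ ∣ 2 * x ^ 2 + z ^ 2 := by
    rw [h]; exact dvd_add (Dvd.dvd.mul_right (dvd_pow_self ℓ two_ne_zero) n) (Dvd.intro_left r rfl)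
  have h0 : (2 * (x : ZMod ℓ) ^ 2 + (z : ZMod ℓ) ^ 2) = 0 := by
    have := (ZMod.natCast_eq_zero_iff _ ℓ).mpr hdvdN
    push_cast at this
    convert this using 1
  have hx0 : (x : ZMod ℓ) = 0 := by
    by_contra hx
    apply hns
    have hzx : (z : ZMod ℓ)^2 = -2 * (x:ZMod ℓ)^2 := by linear_combination h0
    have hx2 : ((x:ZMod ℓ))^2 ≠ 0 := pow_ne_zero _ hx
    refine ⟨(z : ZMod ℓ) * (x : ZMod ℓ)⁻¹, ?_⟩
    have hc : ((z:ZMod ℓ) * (x:ZMod ℓ)⁻¹)^2 = -2 := by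
      calc ((z:ZMod ℓ) * (x:ZMod ℓ)⁻¹)^2 = -2 * ((x:ZMod ℓ)^2 * ((x:ZMod ℓ)^2)⁻¹) := by
            rw [mul_pow, inv_pow, hzx]; ring
        _ = -2 := by rw [mul_inv_cancel₀ hx2, mul_one]
    rw [← sq]; exact hc.symm
  have hz0 : (z : ZMod ℓ) = 0 := by
    rw [hx0] at h0
    have : (z:ZMod ℓ)^2 = 0 := by simpa using h0
    exact pow_eq_zero_iff two_ne_zero |>.mp this
  have hxd : ℓ ∣ x := (ZMod.natCast_eq_zero_iff _ _).mp hx0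
  have hzd : ℓ ∣ z := (ZMod.natCast_eq_zero_iff _ _).mp hz0
  have h2 : ℓ^2 ∣ 2 * x ^ 2 + z ^ 2 :=
    dvd_add (Dvd.dvd.mul_left (pow_dvd_pow_of_dvd hxd 2) 2) (pow_dvd_pow_of_dvd hzd 2)
  rw [h] at h2
  have h3 : ℓ^2 ∣ r * ℓ := (Nat.dvd_add_right (Dvd.intro n rfl)).mp h2
  obtain ⟨m, hm⟩ := h3
  apply hndvd
  exact ⟨m, Nat.eq_of_mul_eq_mul_right hℓ.pos (by rw [hm]; ring)⟩

/-- `sqRep k n` is the number of ordered `k`-tuples `(x₁, …, x_k)` of positive integers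
with `x₁² + ⋯ + x_k² = n`. -/
noncomputable def sqRep (k n : ℕ) : ℕ :=
  Nat.card {v : Fin k → ℕ+ // ∑ i, (v i : ℕ) ^ 2 = n}

/-- If `N` admits no representation `2x² + z²`, then `c₃(N)` is even: the involution
swapping the first two coordinates is fixed-point-free. -/
theorem sqRep_three_even (N : ℕ) (key : ∀ x z : ℕ, 2 * x ^ 2 + z ^ 2 ≠ N) :
    Even (sqRep 3 N) := by
  classical
  set S := {v : Fin 3 → ℕ+ // ∑ i, (v i : ℕ) ^ 2 = N} with hS
  have hne : ∀ v : S, ((v.1 0 : ℕ)) ≠ (v.1 1 : ℕ) := by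
    rintro ⟨v, hv⟩ heq
    change ((v 0 : ℕ)) = ((v 1 : ℕ)) at heq
    apply key (v 1 : ℕ) (v 2 : ℕ)
    rw [Fin.sum_univ_three] at hv
    rw [heq] at hv
    omega
  haveI : Finite S := by
    have : Function.Injective (fun (v : S) => fun i => (⟨(v.1 i : ℕ), by
        have h1 : (v.1 i : ℕ)^2 ≤ ∑ j, (v.1 j : ℕ)^2 := Finset.single_le_sum
          (f := fun j => (v.1 j : ℕ)^2) (fun j _ => Nat.zero_le _) (Finset.mem_univ i)
        rw [v.2] at h1
        have h2 : (v.1 i : ℕ) ≤ (v.1 i : ℕ)^2 := Nat.le_self_pow two_ne_zero _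
        omega⟩ : Fin (N+1))) := by
      intro a b hab
      ext i
      have := congrFun hab i
      simpa [Fin.mk.injEq] using this
    exact Finite.of_injective _ this
  have hsum : ∀ v : Fin 3 → ℕ+, (∑ i, (v i : ℕ)^2 = N) →
      ∑ i, ((v (Equiv.swap 0 1 i) : ℕ))^2 = N := by
    intro v hv
    rw [← hv]
    exact Fintype.sum_equiv (Equiv.swap 0 1) _ _ (fun i => rfl)
  let e : S → S := fun v => ⟨fun i => v.1 (Equiv.swap 0 1 i), hsum v.1 v.2⟩
  have he : ∀ v, e (e v) = v := by
    intro v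
    apply Subtype.ext
    funext i
    show v.1 (Equiv.swap 0 1 (Equiv.swap 0 1 i)) = v.1 i
    rw [Equiv.swap_apply_self]
  have he0 : ∀ v : S, ((e v).1 0 : ℕ) = v.1 1 := fun v => by
    show ((v.1 (Equiv.swap 0 1 0) : ℕ)) = _; rw [Equiv.swap_apply_left]
  have he1 : ∀ v : S, ((e v).1 1 : ℕ) = v.1 0 := fun v => by
    show ((v.1 (Equiv.swap 0 1 1) : ℕ)) = _; rw [Equiv.swap_apply_right]
  set P : S → Prop := fun v => (v.1 0 : ℕ) < (v.1 1 : ℕ) with hP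
  have hPe : ∀ v : S, P (e v) ↔ ¬ P v := by
    intro v
    have := hne v
    simp only [hP, he0, he1]
    omega
  let f : {v : S // P v} ≃ {v : S // ¬ P v} :=
    { toFun := fun v => ⟨e v.1, fun h => (hPe v.1).mp h v.2⟩
      invFun := fun v => ⟨e v.1, (hPe v.1).mpr v.2⟩
      left_inv := fun v => by simp [he v.1]
      right_inv := fun v => by simp [he v.1] }
  have hcard : Nat.card S = Nat.card {v : S // P v} + Nat.card {v : S // ¬ P v} := by
    rw [← Nat.card_sum]
    exact (Nat.card_congr (Equiv.sumCompl P)).symm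
  rw [Nat.card_congr f] at hcard
  exact ⟨Nat.card {v : S // ¬ P v}, hcard⟩

theorem c3_ell_sq_even (ℓ : ℕ) (hℓ : ℓ.Prime) (hodd : Odd ℓ) (hmod : ℓ % 8 = 7)
    (r : ℕ) (hr : 0 < r) (hndvd : ¬ ℓ ∣ r) (n : ℕ) :
    Even (sqRep 3 (ℓ ^ 2 * n + r * ℓ)) := by
  exact sqRep_three_even _ (fun x z h => no_two_sq_rep ℓ hℓ hmod r hndvd n x z h)
end

section
/- If the positive integer n is not the square of an odd positive integer, then c₄(4n) ≡ c₄(n) (mod 2). Equivalently, the number of ordered quadruples (x, y, z, w) of odd positive integers with x² + y² + z² + w² = 4n is even. -/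
namespace SqRepAux

instance instFinite (k n : ℕ) : Finite {v : Fin k → ℕ+ // ∑ i, (v i : ℕ) ^ 2 = n} := by
  apply Finite.of_injective
    (f := fun v : {v : Fin k → ℕ+ // ∑ i, (v i : ℕ) ^ 2 = n} =>
      fun i : Fin k => (⟨(v.1 i : ℕ), by
        have h1 : (v.1 i : ℕ) ≤ (v.1 i : ℕ) ^ 2 := Nat.le_self_pow two_ne_zero _
        have h2 : (v.1 i : ℕ) ^ 2 ≤ n :=
          (Finset.single_le_sum (f := fun j => (v.1 j : ℕ) ^ 2)
            (fun _ _ => Nat.zero_le _) (Finset.mem_univ i)).trans (le_of_eq v.2)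
        omega⟩ : Fin (n + 1)))
  intro a b hab
  apply Subtype.ext
  funext i
  have := congrFun hab i
  exact PNat.coe_injective (by simpa using congrArg Fin.val this)

instance instFinite' (n : ℕ) (R : (Fin 4 → ℕ+) → Prop) :
    Finite {v : Fin 4 → ℕ+ // (∑ i, (v i : ℕ) ^ 2 = n) ∧ R v} := by
  apply Finite.of_injective
    (f := fun v : {v : Fin 4 → ℕ+ // (∑ i, (v i : ℕ) ^ 2 = n) ∧ R v} =>
      (⟨v.1, v.2.1⟩ : {v : Fin 4 → ℕ+ // ∑ i, (v i : ℕ) ^ 2 = n}))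
  intro a b hab
  simp only [Subtype.mk.injEq] at hab
  exact Subtype.ext hab

lemma even_natCard_of_involution {α : Type*} [Finite α] (g : α → α)
    (hg : ∀ a, g (g a) = a) (hfp : ∀ a, g a ≠ a) : Even (Nat.card α) := by
  classical
  have := Fintype.ofFinite α
  rw [Nat.card_eq_fintype_card]
  have hsum : ∑ _x : α, (1 : ZMod 2) = 0 :=
    Finset.sum_ninvolution g (by intro a; decide) (fun a _ => hfp a)
      (fun a => Finset.mem_univ _) hg
  rw [Finset.sum_const, Finset.card_univ, nsmul_eq_mul, mul_one] at hsum
  have := (ZMod.natCast_eq_zero_iff (Fintype.card α) 2).mp hsum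
  exact even_iff_two_dvd.mpr this

lemma sq_mod4 (x : ℕ) : (x % 2 = 0 ∧ x ^ 2 % 4 = 0) ∨ (x % 2 = 1 ∧ x ^ 2 % 4 = 1) := by
  rcases Nat.even_or_odd x with ⟨k, hk⟩ | ⟨k, hk⟩
  · left
    subst hk
    have : (k + k) ^ 2 = 4 * k ^ 2 := by ring
    omega
  · right
    subst hk
    have : (2 * k + 1) ^ 2 = 4 * (k ^ 2 + k) + 1 := by ring
    omega

lemma dichotomy (n : ℕ) (v : Fin 4 → ℕ+) (hv : ∑ i, (v i : ℕ) ^ 2 = 4 * n) :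
    (∀ i, (v i : ℕ) % 2 = 0) ∨ (∀ i, (v i : ℕ) % 2 = 1) := by
  have h0 := sq_mod4 (v 0 : ℕ)
  have h1 := sq_mod4 (v 1 : ℕ)
  have h2 := sq_mod4 (v 2 : ℕ)
  have h3 := sq_mod4 (v 3 : ℕ)
  rw [Fin.sum_univ_four] at hv
  have key : ((v 0 : ℕ) % 2 = 0 ∧ (v 1 : ℕ) % 2 = 0 ∧ (v 2 : ℕ) % 2 = 0 ∧ (v 3 : ℕ) % 2 = 0)
      ∨ ((v 0 : ℕ) % 2 = 1 ∧ (v 1 : ℕ) % 2 = 1 ∧ (v 2 : ℕ) % 2 = 1 ∧ (v 3 : ℕ) % 2 = 1) := by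
    omega
  rcases key with ⟨a, b, c, d⟩ | ⟨a, b, c, d⟩
  · left; intro i; fin_cases i <;> assumption
  · right; intro i; fin_cases i <;> assumption

/-- The fixed-point-free involution on all-odd quadruples. -/
def gfun (u : Fin 4 → ℕ+) : Fin 4 → ℕ+ :=
  if u 0 = u 1 ∧ u 2 = u 3 then ![u 2, u 3, u 0, u 1] else ![u 1, u 0, u 3, u 2]

lemma gsum (u : Fin 4 → ℕ+) : ∑ i, (gfun u i : ℕ) ^ 2 = ∑ i, (u i : ℕ) ^ 2 := by
  unfold gfun
  split_ifs <;>
  · rw [Fin.sum_univ_four, Fin.sum_univ_four]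
    simp only [Matrix.cons_val_zero, Matrix.cons_val_one, Matrix.head_cons,
      Matrix.cons_val_two, Matrix.tail_cons, Matrix.cons_val_three]
    ring

lemma godd (u : Fin 4 → ℕ+) (hu : ∀ i, (u i : ℕ) % 2 = 1) :
    ∀ i, (gfun u i : ℕ) % 2 = 1 := by
  unfold gfun
  split_ifs <;>
  · intro i
    fin_cases i <;> simp <;> apply hu

lemma ginv (u : Fin 4 → ℕ+) : gfun (gfun u) = u := by
  by_cases hc : u 0 = u 1 ∧ u 2 = u 3
  · have h1 : gfun u = ![u 2, u 3, u 0, u 1] := by unfold gfun; simp [hc]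
    rw [h1]
    have hc2 : (![u 2, u 3, u 0, u 1]) 0 = (![u 2, u 3, u 0, u 1]) 1 ∧
        (![u 2, u 3, u 0, u 1]) 2 = (![u 2, u 3, u 0, u 1]) 3 := by
      simpa using ⟨hc.2, hc.1⟩
    have h2 : gfun ![u 2, u 3, u 0, u 1] = ![(![u 2, u 3, u 0, u 1]) 2,
        (![u 2, u 3, u 0, u 1]) 3, (![u 2, u 3, u 0, u 1]) 0, (![u 2, u 3, u 0, u 1]) 1] := by
      unfold gfun; simp only [if_pos hc2]
    rw [h2]
    funext i
    fin_cases i <;> simp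
  · have h1 : gfun u = ![u 1, u 0, u 3, u 2] := by unfold gfun; simp [hc]
    rw [h1]
    have hc2 : ¬((![u 1, u 0, u 3, u 2]) 0 = (![u 1, u 0, u 3, u 2]) 1 ∧
        (![u 1, u 0, u 3, u 2]) 2 = (![u 1, u 0, u 3, u 2]) 3) := by
      simp only [Matrix.cons_val_zero, Matrix.cons_val_one, Matrix.head_cons,
        Matrix.cons_val_two, Matrix.tail_cons, Matrix.cons_val_three]
      intro hcc
      exact hc ⟨hcc.1.symm, hcc.2.symm⟩
    have h2 : gfun ![u 1, u 0, u 3, u 2] = ![(![u 1, u 0, u 3, u 2]) 1,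
        (![u 1, u 0, u 3, u 2]) 0, (![u 1, u 0, u 3, u 2]) 3, (![u 1, u 0, u 3, u 2]) 2] := by
      unfold gfun; simp only [if_neg hc2]
    rw [h2]
    funext i
    fin_cases i <;> simp

lemma gfix (u : Fin 4 → ℕ+) (hf : gfun u = u) :
    u 1 = u 0 ∧ u 2 = u 0 ∧ u 3 = u 0 := by
  by_cases hc : u 0 = u 1 ∧ u 2 = u 3
  · have h1 : gfun u = ![u 2, u 3, u 0, u 1] := by unfold gfun; simp [hc]
    rw [h1] at hf
    have h0 : u 2 = u 0 := by simpa using congrFun hf 0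
    exact ⟨hc.1.symm, h0, by rw [← hc.2, h0]⟩
  · have h1 : gfun u = ![u 1, u 0, u 3, u 2] := by unfold gfun; simp [hc]
    rw [h1] at hf
    have h0 : u 1 = u 0 := by simpa using congrFun hf 0
    have h2 : u 3 = u 2 := by simpa using congrFun hf 2
    exact absurd ⟨h0.symm, h2.symm⟩ hc

lemma two_mul_coe (x : ℕ+) : ((2 * x : ℕ+) : ℕ) = 2 * (x : ℕ) := by
  push_cast; ring

/-- Doubling map from representations of `n` to all-even representations of `4n`. -/
def dbl (n : ℕ) (w : {v : Fin 4 → ℕ+ // ∑ i, (v i : ℕ) ^ 2 = n}) :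
    {v : Fin 4 → ℕ+ // (∑ i, (v i : ℕ) ^ 2 = 4 * n) ∧ ∀ i, (v i : ℕ) % 2 = 0} := by
  refine ⟨fun i => 2 * w.1 i, ?_, ?_⟩
  · show ∑ i, ((2 * w.1 i : ℕ+) : ℕ) ^ 2 = 4 * n
    have key : ∀ i : Fin 4, ((2 * w.1 i : ℕ+) : ℕ) ^ 2 = 4 * (w.1 i : ℕ) ^ 2 := by
      intro i; push_cast; ring
    calc ∑ i, ((2 * w.1 i : ℕ+) : ℕ) ^ 2 = ∑ i, 4 * (w.1 i : ℕ) ^ 2 :=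
          Finset.sum_congr rfl fun i _ => key i
      _ = 4 * ∑ i, (w.1 i : ℕ) ^ 2 := (Finset.mul_sum _ _ _).symm
      _ = 4 * n := by rw [w.2]
  · intro i
    show ((2 * w.1 i : ℕ+) : ℕ) % 2 = 0
    rw [two_mul_coe]
    omega

lemma dbl_bij (n : ℕ) : Function.Bijective (dbl n) := by
  constructor
  · intro a b hab
    apply Subtype.ext
    funext i
    have h1 : ((dbl n a).1 i : ℕ) = ((dbl n b).1 i : ℕ) := by rw [hab]
    have h2 : ((dbl n a).1 i : ℕ) = 2 * (a.1 i : ℕ) := two_mul_coe _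
    have h3 : ((dbl n b).1 i : ℕ) = 2 * (b.1 i : ℕ) := two_mul_coe _
    exact PNat.coe_injective (by omega)
  · rintro ⟨v, hv, hev⟩
    have hpos : ∀ i : Fin 4, 0 < (v i : ℕ) / 2 := by
      intro i
      have := (v i).pos
      have := hev i
      omega
    have hs : ∑ i, ((v i : ℕ) / 2) ^ 2 = n := by
      have key : ∀ i : Fin 4, 4 * ((v i : ℕ) / 2) ^ 2 = (v i : ℕ) ^ 2 := by
        intro i
        have he := hev i
        obtain ⟨q, hq⟩ : ∃ q, (v i : ℕ) = 2 * q := ⟨(v i : ℕ) / 2, by omega⟩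
        rw [hq]
        simp [Nat.mul_div_cancel_left]
        ring
      have hs4 : 4 * ∑ i, ((v i : ℕ) / 2) ^ 2 = 4 * n := by
        rw [Finset.mul_sum]
        calc ∑ i, 4 * ((v i : ℕ) / 2) ^ 2 = ∑ i, (v i : ℕ) ^ 2 :=
              Finset.sum_congr rfl fun i _ => key i
          _ = 4 * n := hv
      omega
    refine ⟨⟨fun i => ⟨(v i : ℕ) / 2, hpos i⟩, ?_⟩, ?_⟩
    · show ∑ i, ((v i : ℕ) / 2) ^ 2 = n
      exact hs
    · apply Subtype.ext
      funext i
      apply PNat.coe_injective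
      have he := hev i
      have hp := (v i).pos
      rw [show ∀ (m : ℕ) (w : {v : Fin 4 → ℕ+ // ∑ i, (v i : ℕ) ^ 2 = m}) (j : Fin 4),
        ((dbl m w).1 j : ℕ) = 2 * (w.1 j : ℕ) from fun m w j => two_mul_coe _]
      show 2 * ((v i : ℕ) / 2) = (v i : ℕ)
      omega

/-- Halving equivalence between all-even representations of `4n` and representations of `n`. -/
noncomputable def halfEquiv (n : ℕ) :
    {v : Fin 4 → ℕ+ // (∑ i, (v i : ℕ) ^ 2 = 4 * n) ∧ ∀ i, (v i : ℕ) % 2 = 0} ≃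
    {v : Fin 4 → ℕ+ // ∑ i, (v i : ℕ) ^ 2 = n} :=
  (Equiv.ofBijective (dbl n) (dbl_bij n)).symm


lemma split_eq (n : ℕ) : sqRep 4 (4 * n) =
    Nat.card {v : Fin 4 → ℕ+ // (∑ i, (v i : ℕ) ^ 2 = 4 * n) ∧ ∀ i, (v i : ℕ) % 2 = 0}
    + Nat.card {v : Fin 4 → ℕ+ //
        (∑ i, (v i : ℕ) ^ 2 = 4 * n) ∧ ¬ ∀ i, (v i : ℕ) % 2 = 0} := by
  classical
  rw [sqRep]
  have e1 : {v : Fin 4 → ℕ+ // (∑ i, (v i : ℕ) ^ 2 = 4 * n) ∧ ∀ i, (v i : ℕ) % 2 = 0}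
      ⊕ {v : Fin 4 → ℕ+ // (∑ i, (v i : ℕ) ^ 2 = 4 * n) ∧ ¬ ∀ i, (v i : ℕ) % 2 = 0} ≃
      {v : Fin 4 → ℕ+ // ∑ i, (v i : ℕ) ^ 2 = 4 * n} := by
    refine Equiv.trans (Equiv.sumCongr ?_ ?_)
      (Equiv.sumCompl
        (fun x : {v : Fin 4 → ℕ+ // ∑ i, (v i : ℕ) ^ 2 = 4 * n} =>
          ∀ i, (x.1 i : ℕ) % 2 = 0))
    · exact (Equiv.subtypeSubtypeEquivSubtypeInter _ _).symm
    · exact (Equiv.subtypeSubtypeEquivSubtypeInter _ _).symm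
  rw [← Nat.card_congr e1, Nat.card_sum]

lemma even_part_eq (n : ℕ) : sqRep 4 n =
    Nat.card {v : Fin 4 → ℕ+ // (∑ i, (v i : ℕ) ^ 2 = 4 * n) ∧ ∀ i, (v i : ℕ) % 2 = 0} := by
  rw [sqRep]
  exact (Nat.card_congr (halfEquiv n)).symm

lemma odd_part_even (n : ℕ) (h : ¬ ∃ a : ℕ, 0 < a ∧ Odd a ∧ n = a ^ 2) :
    Even (Nat.card {v : Fin 4 → ℕ+ //
      (∑ i, (v i : ℕ) ^ 2 = 4 * n) ∧ ¬ ∀ i, (v i : ℕ) % 2 = 0}) := by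
  have hodd : ∀ v : {v : Fin 4 → ℕ+ //
      (∑ i, (v i : ℕ) ^ 2 = 4 * n) ∧ ¬ ∀ i, (v i : ℕ) % 2 = 0},
      ∀ i, (v.1 i : ℕ) % 2 = 1 := by
    intro v
    rcases dichotomy n v.1 v.2.1 with hc | hc
    · exact absurd hc v.2.2
    · exact hc
  have hmem : ∀ v : {v : Fin 4 → ℕ+ //
      (∑ i, (v i : ℕ) ^ 2 = 4 * n) ∧ ¬ ∀ i, (v i : ℕ) % 2 = 0},
      (∑ i, (gfun v.1 i : ℕ) ^ 2 = 4 * n) ∧ ¬ ∀ i, (gfun v.1 i : ℕ) % 2 = 0 := by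
    intro v
    refine ⟨(gsum v.1).trans v.2.1, ?_⟩
    intro hq
    have h0 := hq 0
    have h1 := godd v.1 (hodd v) 0
    omega
  refine even_natCard_of_involution (fun v => ⟨gfun v.1, hmem v⟩) ?_ ?_
  · intro a
    exact Subtype.ext (ginv a.1)
  · intro a hfix
    have hf : gfun a.1 = a.1 := congrArg Subtype.val hfix
    obtain ⟨e1, e2, e3⟩ := gfix a.1 hf
    have hv := a.2.1
    rw [Fin.sum_univ_four, e1, e2, e3] at hv
    have hsq : (a.1 0 : ℕ) ^ 2 = n := by omega
    exact h ⟨(a.1 0 : ℕ), (a.1 0).pos, Nat.odd_iff.mpr (hodd a 0), hsq.symm⟩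

end SqRepAux

open SqRepAux in
theorem c4_four_mul_mod_two (n : ℕ) (hn : 0 < n)
    (h : ¬ ∃ a : ℕ, 0 < a ∧ Odd a ∧ n = a ^ 2) :
    sqRep 4 (4 * n) ≡ sqRep 4 n [MOD 2] := by
  obtain ⟨m, hm⟩ := odd_part_even n h
  show sqRep 4 (4 * n) % 2 = sqRep 4 n % 2
  rw [split_eq n, even_part_eq n, hm, show m + m = 2 * m by ring]
  exact Nat.add_mul_mod_self_left _ 2 m
end

section
/- If the positive integer n satisfies n ≢ 1, 2, 5 (mod 8), then c₄(4n) ≡ c₄(n) (mod 4). Equivalently, the number of ordered quadruples (x, y, z, w) of odd positive integers with x² + y² + z² + w² = 4n is divisible by 4. -/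
/- Auxiliary material -/

lemma oddsq8 {x : ℕ} (hx : x % 2 = 1) : x ^ 2 % 8 = 1 := by
  obtain ⟨k, rfl⟩ : ∃ k, x = 2 * k + 1 := ⟨x / 2, by omega⟩
  obtain ⟨m, hm⟩ := Nat.even_mul_succ_self k
  have h : (2 * k + 1) ^ 2 = 4 * (k * (k + 1)) + 1 := by ring
  rw [h, hm]
  omega

lemma sqmod4 (x : ℕ) : x ^ 2 % 4 = x % 2 := by
  rcases Nat.even_or_odd x with ⟨k, rfl⟩ | ⟨k, rfl⟩
  · have h : (k + k) ^ 2 = 4 * k ^ 2 := by ring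
    rw [h]; omega
  · have h : (2 * k + 1) ^ 2 = 4 * (k ^ 2 + k) + 1 := by ring
    rw [h]; omega

lemma finite_sol (k m : ℕ) : Finite {v : Fin k → ℕ+ // ∑ i, (v i : ℕ) ^ 2 = m} := by
  apply Finite.of_injective (β := Fin k → Fin (m + 1))
    (fun v i => ⟨(v.1 i : ℕ), by
      have h1 : (v.1 i : ℕ) ≤ (v.1 i : ℕ) ^ 2 := Nat.le_self_pow two_ne_zero _
      have h2 : (v.1 i : ℕ) ^ 2 ≤ ∑ j, (v.1 j : ℕ) ^ 2 := Finset.single_le_sum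
        (f := fun j => ((v.1 j : ℕ)) ^ 2) (fun _ _ => Nat.zero_le _) (Finset.mem_univ i)
      rw [v.2] at h2
      omega⟩)
  intro a b h
  apply Subtype.ext; funext i
  have := congrFun h i
  simpa [Fin.ext_iff, PNat.coe_inj] using this

lemma parity_split (n : ℕ) (v : Fin 4 → ℕ+) (hv : ∑ i, (v i : ℕ) ^ 2 = 4 * n) :
    (∀ i, (v i : ℕ) % 2 = 0) ∨ (∀ i, (v i : ℕ) % 2 = 1) := by
  rw [Fin.sum_univ_four] at hv
  have m0 := sqmod4 (v 0); have m1 := sqmod4 (v 1)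
  have m2 := sqmod4 (v 2); have m3 := sqmod4 (v 3)
  have key : ((v 0 : ℕ) % 2 = 0 ∧ (v 1 : ℕ) % 2 = 0 ∧ (v 2 : ℕ) % 2 = 0 ∧ (v 3 : ℕ) % 2 = 0)
      ∨ ((v 0 : ℕ) % 2 = 1 ∧ (v 1 : ℕ) % 2 = 1 ∧ (v 2 : ℕ) % 2 = 1 ∧ (v 3 : ℕ) % 2 = 1) := by
    omega
  rcases key with ⟨a0, a1, a2, a3⟩ | ⟨a0, a1, a2, a3⟩
  · left; intro i; fin_cases i <;> assumption
  · right; intro i; fin_cases i <;> assumption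

def SolO (n : ℕ) := {v : Fin 4 → ℕ+ // (∑ i, (v i : ℕ) ^ 2 = 4 * n) ∧ ∀ i, (v i : ℕ) % 2 = 1}

def Sh {n : ℕ} (k : Fin 4) (v : SolO n) : SolO n :=
  ⟨fun i => v.1 (i + k), by
    constructor
    · exact (Fintype.sum_equiv (Equiv.addRight k) _ _ (fun i => rfl)).trans v.2.1
    · intro i; exact v.2.2 (i + k)⟩

lemma Sh_zero {n : ℕ} (v : SolO n) : Sh 0 v = v := by
  apply Subtype.ext; funext i; show v.1 (i + 0) = v.1 i; rw [add_zero]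

lemma Sh_comp {n : ℕ} (j k : Fin 4) (v : SolO n) : Sh j (Sh k v) = Sh (k + j) v := by
  apply Subtype.ext; funext i
  show v.1 ((i + j) + k) = v.1 (i + (k + j))
  rw [add_assoc, add_comm j k]

lemma sq_congr (x y : ℕ+) (h : x = y) : (x : ℕ) ^ 2 = (y : ℕ) ^ 2 := by rw [h]

lemma fin4_cases (d : Fin 4) : d = 0 ∨ d = 1 ∨ d = 2 ∨ d = 3 := by revert d; decide

lemma Sh_free {n : ℕ} (h1 : n % 8 ≠ 1) (h5 : n % 8 ≠ 5) (w : SolO n) (k k' : Fin 4)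
    (h : Sh k w = Sh k' w) : k = k' := by
  have h' : ∀ i : Fin 4, w.1 (i + k) = w.1 (i + k') :=
    fun i => congrFun (congrArg Subtype.val h) i
  have hd : ∀ i : Fin 4, w.1 (i + (k - k')) = w.1 i := by
    intro i
    simpa [sub_add_eq_add_sub, add_sub_assoc, sub_self, add_zero] using h' (i - k')
  have hsum := w.2.1
  rw [Fin.sum_univ_four] at hsum
  have o0 := oddsq8 (w.2.2 0); have o1 := oddsq8 (w.2.2 1)
  have o2 := oddsq8 (w.2.2 2); have o3 := oddsq8 (w.2.2 3)
  have goal_of : k - k' = 0 → k = k' := fun hh => by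
    have := sub_eq_zero.mp hh; exact this
  rcases fin4_cases (k - k') with h0 | h0 | h0 | h0
  · exact goal_of h0
  · exfalso
    rw [h0] at hd
    have e0 : w.1 1 = w.1 0 := by simpa using hd 0
    have e1 : w.1 2 = w.1 1 := by simpa using hd 1
    have e2 : w.1 3 = w.1 2 := by simpa using hd 2
    have q0 := sq_congr _ _ e0; have q1 := sq_congr _ _ e1; have q2 := sq_congr _ _ e2
    clear h h' hd h0 goal_of e0 e1 e2
    omega
  · exfalso
    rw [h0] at hd
    have e0 : w.1 2 = w.1 0 := by simpa using hd 0
    have e1 : w.1 3 = w.1 1 := by simpa using hd 1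
    have q0 := sq_congr _ _ e0; have q1 := sq_congr _ _ e1
    clear h h' hd h0 goal_of e0 e1
    omega
  · exfalso
    rw [h0] at hd
    have e0 : w.1 3 = w.1 0 := by simpa using hd 0
    have e1 : w.1 0 = w.1 1 := by simpa using hd 1
    have e2 : w.1 1 = w.1 2 := by simpa using hd 2
    have q0 := sq_congr _ _ e0; have q1 := sq_congr _ _ e1; have q2 := sq_congr _ _ e2
    clear h h' hd h0 goal_of e0 e1 e2
    omega

lemma dvd_card_solO (n : ℕ) (h1 : n % 8 ≠ 1) (h5 : n % 8 ≠ 5) : 4 ∣ Nat.card (SolO n) := by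
  classical
  let st : Setoid (SolO n) := {
    r := fun v w => ∃ k : Fin 4, Sh k v = w
    iseqv := {
      refl := fun v => ⟨0, Sh_zero v⟩
      symm := by
        rintro v w ⟨k, hk⟩
        refine ⟨-k, ?_⟩
        rw [← hk, Sh_comp]
        simp [Sh_zero]
      trans := by
        rintro u v w ⟨k, hk⟩ ⟨j, hj⟩
        exact ⟨k + j, by rw [← hj, ← hk, Sh_comp]⟩ } }
  let Q := Quotient st
  let f : Q × Fin 4 → SolO n := fun p => Sh p.2 p.1.out
  have hbij : Function.Bijective f := by
    constructor
    · rintro ⟨c, k⟩ ⟨c', k'⟩ hf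
      simp only [f] at hf
      have hcc : c = c' := by
        rw [← Quotient.out_eq c, ← Quotient.out_eq c']
        apply Quotient.sound
        refine ⟨k + -k', ?_⟩
        rw [← Sh_comp, hf, Sh_comp]
        simp [Sh_zero]
      subst hcc
      have hk : k = k' := Sh_free h1 h5 c.out k k' hf
      rw [hk]
    · intro v
      have hout : Quotient.mk st (Quotient.out (Quotient.mk st v)) = Quotient.mk st v :=
        Quotient.out_eq _
      obtain ⟨k, hk⟩ := Quotient.exact hout
      exact ⟨(Quotient.mk st v, k), hk⟩
  have hcard := Nat.card_congr (Equiv.ofBijective f hbij)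
  have h4 : Nat.card (Fin 4) = 4 := by simp
  rw [Nat.card_prod, h4] at hcard
  exact ⟨Nat.card Q, by omega⟩

lemma card_even (n : ℕ) :
    Nat.card {v : Fin 4 → ℕ+ // (∑ i, (v i : ℕ) ^ 2 = 4 * n) ∧ ∀ i, (v i : ℕ) % 2 = 0}
      = Nat.card {v : Fin 4 → ℕ+ // ∑ i, (v i : ℕ) ^ 2 = n} := by
  have hc : ∀ x : ℕ+, ((2 * x : ℕ+) : ℕ) = 2 * (x : ℕ) := fun x => rfl
  let g : {v : Fin 4 → ℕ+ // ∑ i, (v i : ℕ) ^ 2 = n} →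
      {v : Fin 4 → ℕ+ // (∑ i, (v i : ℕ) ^ 2 = 4 * n) ∧ ∀ i, (v i : ℕ) % 2 = 0} :=
    fun u => ⟨fun i => 2 * u.1 i, by
      constructor
      · have : ∑ i, ((2 * u.1 i : ℕ+) : ℕ) ^ 2 = ∑ i, 4 * ((u.1 i : ℕ)) ^ 2 := by
          refine Finset.sum_congr rfl fun i _ => ?_
          rw [hc]; ring
        rw [this, ← Finset.mul_sum, u.2]
      · intro i; rw [hc]; omega⟩
  have hbij : Function.Bijective g := by
    constructor
    · intro a b h
      apply Subtype.ext; funext i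
      have : (2 : ℕ+) * a.1 i = 2 * b.1 i := congrFun (congrArg Subtype.val h) i
      exact mul_left_cancel this
    · intro v
      have hvpos : ∀ i, 1 ≤ (v.1 i : ℕ) := fun i => (v.1 i).one_le
      have hveven := v.2.2
      have hv2 : ∀ i, (v.1 i : ℕ) = 2 * ((v.1 i : ℕ) / 2) := fun i => by
        have := hveven i; omega
      have hupos : ∀ i, 0 < (v.1 i : ℕ) / 2 := fun i => by
        have := hvpos i; have := hveven i; omega
      refine ⟨⟨fun i => ⟨(v.1 i : ℕ) / 2, hupos i⟩, ?_⟩, ?_⟩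
      · have hs := v.2.1
        have key : ∑ i, ((v.1 i : ℕ)) ^ 2 = ∑ i, 4 * (((v.1 i : ℕ) / 2)) ^ 2 := by
          refine Finset.sum_congr rfl fun i _ => ?_
          obtain ⟨k, hk⟩ : ∃ k, (v.1 i : ℕ) = 2 * k := ⟨_, hv2 i⟩
          rw [hk, Nat.mul_div_cancel_left _ (by norm_num : 0 < 2)]
          ring
        rw [key, ← Finset.mul_sum] at hs
        show ∑ i, (((v.1 i : ℕ)) / 2) ^ 2 = n
        omega
      · apply Subtype.ext; funext i
        apply PNat.coe_injective
        rw [hc]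
        show 2 * ((v.1 i : ℕ) / 2) = (v.1 i : ℕ)
        have := hveven i; have := hvpos i; omega
  exact (Nat.card_congr (Equiv.ofBijective g hbij)).symm

lemma card_split (n : ℕ) :
    Nat.card {v : Fin 4 → ℕ+ // ∑ i, (v i : ℕ) ^ 2 = 4 * n}
      = Nat.card {v : Fin 4 → ℕ+ // (∑ i, (v i : ℕ) ^ 2 = 4 * n) ∧ ∀ i, (v i : ℕ) % 2 = 0}
        + Nat.card (SolO n) := by
  classical
  have fin1 : Finite {v : Fin 4 → ℕ+ // ∑ i, (v i : ℕ) ^ 2 = 4 * n} := finite_sol 4 (4 * n)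
  have hinj : ∀ (p : (Fin 4 → ℕ+) → Prop),
      Function.Injective (fun v : {v : Fin 4 → ℕ+ // (∑ i, (v i : ℕ) ^ 2 = 4 * n) ∧ p v} =>
        (⟨v.1, v.2.1⟩ : {v : Fin 4 → ℕ+ // ∑ i, (v i : ℕ) ^ 2 = 4 * n})) := by
    intro p a b h
    simp only [Subtype.mk.injEq] at h
    exact Subtype.ext h
  have finE : Finite {v : Fin 4 → ℕ+ // (∑ i, (v i : ℕ) ^ 2 = 4 * n) ∧ ∀ i, (v i : ℕ) % 2 = 0} :=
    Finite.of_injective _ (hinj _)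
  have finO : Finite (SolO n) := Finite.of_injective _ (hinj (fun v => ∀ i, (v i : ℕ) % 2 = 1))
  let φ : {v : Fin 4 → ℕ+ // (∑ i, (v i : ℕ) ^ 2 = 4 * n) ∧ ∀ i, (v i : ℕ) % 2 = 0} ⊕ SolO n →
      {v : Fin 4 → ℕ+ // ∑ i, (v i : ℕ) ^ 2 = 4 * n} :=
    Sum.elim (fun v => ⟨v.1, v.2.1⟩) (fun v => ⟨v.1, v.2.1⟩)
  have hbij : Function.Bijective φ := by
    constructor
    · rintro (a | a) (b | b) h <;>
        simp only [φ, Sum.elim_inl, Sum.elim_inr, Subtype.mk.injEq] at h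
      · exact congrArg Sum.inl (Subtype.ext h)
      · exfalso
        have h0 := a.2.2 0
        have hb := b.2.2 0
        rw [h] at h0
        omega
      · exfalso
        have h0 := a.2.2 0
        have hb := b.2.2 0
        rw [h] at h0
        omega
      · exact congrArg Sum.inr (Subtype.ext h)
    · intro v
      rcases parity_split n v.1 v.2 with hE | hO
      · exact ⟨Sum.inl ⟨v.1, v.2, hE⟩, rfl⟩
      · exact ⟨Sum.inr ⟨v.1, v.2, hO⟩, rfl⟩
  rw [← Nat.card_congr (Equiv.ofBijective φ hbij), Nat.card_sum]

theorem c4_four_mul_mod_four (n : ℕ) (hn : 0 < n)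
    (h1 : n % 8 ≠ 1) (h2 : n % 8 ≠ 2) (h5 : n % 8 ≠ 5) :
    sqRep 4 (4 * n) ≡ sqRep 4 n [MOD 4] := by
  have hsplit : sqRep 4 (4 * n) =
      Nat.card {v : Fin 4 → ℕ+ // (∑ i, (v i : ℕ) ^ 2 = 4 * n) ∧ ∀ i, (v i : ℕ) % 2 = 0}
        + Nat.card (SolO n) := card_split n
  obtain ⟨t, ht⟩ := dvd_card_solO n h1 h5
  have heven := card_even n
  have : sqRep 4 (4 * n) = sqRep 4 n + 4 * t := by
    rw [hsplit, heven, ht]; rfl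
  show sqRep 4 (4 * n) % 4 = sqRep 4 n % 4
  rw [this]
  exact Nat.add_mul_mod_self_left (sqRep 4 n) 4 t
end

section
/- If the positive integer n satisfies n ≢ 1, 2, 5 (mod 8), then c₅(4n) ≡ c₅(n) (mod 2). Equivalently, the number of ordered quintuples (x, y, z, w, v) of positive integers, not all even, with x² + y² + z² + w² + v² = 4n is even. -/
lemma card_modEq_fixed {α : Type*} [Finite α] (f : α → α) (hf : Function.Involutive f) :
    Nat.card α ≡ Nat.card {x : α // f x = x} [MOD 2] := by
  classical
  cases nonempty_fintype α
  haveI h2 : Fact (Nat.Prime 2) := ⟨Nat.prime_two⟩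
  set F : Function.End α := f with hF
  have hpow : F ^ 2 ^ 1 = 1 := by
    show f ∘ (f ∘ id) = id
    funext x
    simpa using hf x
  have key := Equiv.Perm.card_fixedPoints_modEq (f := F) hpow
  rw [Nat.card_eq_fintype_card, Nat.card_eq_fintype_card]
  have hc : Fintype.card ↑(Function.fixedPoints F) = Fintype.card {x : α // f x = x} :=
    Fintype.card_congr (Equiv.subtypeEquivRight fun x => Iff.rfl)
  exact hc ▸ key

lemma parity_subtype {α : Type*} (p : α → Prop) [Finite {a : α // p a}] (f : α → α)
    (hf : Function.Involutive f) (hp : ∀ a, p a → p (f a)) :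
    Nat.card {a : α // p a} ≡ Nat.card {a : α // p a ∧ f a = a} [MOD 2] := by
  have key := card_modEq_fixed (fun x : {a // p a} => ⟨f x.1, hp x.1 x.2⟩)
    (fun x => Subtype.ext (hf x.1))
  refine key.trans ?_
  rw [Nat.card_congr (Equiv.mk
    (fun x => (⟨x.1.1, x.1.2, congrArg Subtype.val x.2⟩ : {a : α // p a ∧ f a = a}))
    (fun a => ⟨⟨a.1, a.2.1⟩, Subtype.ext a.2.2⟩)
    (fun x => by ext; rfl) (fun a => by ext; rfl))]


lemma finite_of_sum {k m : ℕ} {P : (Fin k → ℕ+) → Prop}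
    (h : ∀ v, P v → ∑ i, (v i : ℕ) ^ 2 = m) : Finite {v : Fin k → ℕ+ // P v} := by
  apply Finite.of_injective (β := Fin k → Fin (m + 1))
    (fun v i => ⟨(v.1 i : ℕ), by
      have h1 : ((v.1 i : ℕ)) ^ 2 ≤ m := (h v.1 v.2) ▸
        Finset.single_le_sum (f := fun j => ((v.1 j : ℕ)) ^ 2)
          (fun j _ => Nat.zero_le _) (Finset.mem_univ i)
      have h2 : (v.1 i : ℕ) ≤ (v.1 i : ℕ) ^ 2 := Nat.le_self_pow two_ne_zero _
      omega⟩)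
  intro v w hvw
  apply Subtype.ext; funext i
  exact PNat.coe_injective (congrArg Fin.val (congrFun hvw i))

lemma finite_pair {m : ℕ} {P : ℕ+ × ℕ+ → Prop}
    (h : ∀ p, P p → (p.1 : ℕ) ≤ m ∧ (p.2 : ℕ) ≤ m) : Finite {p : ℕ+ × ℕ+ // P p} := by
  apply Finite.of_injective (β := Fin (m + 1) × Fin (m + 1))
    (fun p => (⟨(p.1.1 : ℕ), by have := (h p.1 p.2).1; omega⟩,
               ⟨(p.1.2 : ℕ), by have := (h p.1 p.2).2; omega⟩))
  intro p q hpq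
  apply Subtype.ext
  have h1 := congrArg Fin.val (congrArg Prod.fst hpq)
  have h2 := congrArg Fin.val (congrArg Prod.snd hpq)
  exact Prod.ext (PNat.coe_injective h1) (PNat.coe_injective h2)

lemma finite_T (m : ℕ) : Finite {p : ℕ+ × ℕ+ // 4 * (p.1 : ℕ) ^ 2 + (p.2 : ℕ) ^ 2 = m} := by
  apply finite_pair
  rintro ⟨a, e⟩ hp
  have hp' : 4 * (a : ℕ) ^ 2 + (e : ℕ) ^ 2 = m := hp
  have ha : (a : ℕ) ≤ (a : ℕ) ^ 2 := Nat.le_self_pow two_ne_zero _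
  have he : (e : ℕ) ≤ (e : ℕ) ^ 2 := Nat.le_self_pow two_ne_zero _
  exact ⟨show (a:ℕ) ≤ m by omega, show (e:ℕ) ≤ m by omega⟩

lemma finite_C (m : ℕ) : Finite {p : ℕ+ × ℕ+ // (p.1 : ℕ) ^ 2 + (p.2 : ℕ) ^ 2 = m} := by
  apply finite_pair
  rintro ⟨a, e⟩ hp
  have hp' : (a : ℕ) ^ 2 + (e : ℕ) ^ 2 = m := hp
  have ha : (a : ℕ) ≤ (a : ℕ) ^ 2 := Nat.le_self_pow two_ne_zero _
  have he : (e : ℕ) ≤ (e : ℕ) ^ 2 := Nat.le_self_pow two_ne_zero _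
  exact ⟨show (a:ℕ) ≤ m by omega, show (e:ℕ) ≤ m by omega⟩

lemma step2 (m : ℕ) : Nat.card {v : Fin 5 → ℕ+ // ∑ i, (v i : ℕ) ^ 2 = m}
    ≡ Nat.card {p : ℕ+ × ℕ+ // 4 * (p.1 : ℕ) ^ 2 + (p.2 : ℕ) ^ 2 = m} [MOD 2] := by
  set σ₁ : Equiv.Perm (Fin 5) := Equiv.swap 0 1 with hσ₁
  set σ₂ : Equiv.Perm (Fin 5) := Equiv.swap 2 3 with hσ₂
  set π : Equiv.Perm (Fin 5) := Equiv.swap 0 2 * Equiv.swap 1 3 with hπ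
  have inv1 : ∀ x, σ₁ (σ₁ x) = x := by decide
  have inv2 : ∀ x, σ₂ (σ₂ x) = x := by decide
  have hππ : ∀ x, π (π x) = x := by decide
  have comm1 : ∀ x, σ₁ (σ₂ x) = σ₂ (σ₁ x) := by decide
  have comm2 : ∀ x, π (σ₁ x) = σ₂ (π x) := by decide
  have comm3 : ∀ x, π (σ₂ x) = σ₁ (π x) := by decide
  have hsum : ∀ (σ : Equiv.Perm (Fin 5)) (v : Fin 5 → ℕ+),
      ∑ i, ((v ∘ σ) i : ℕ) ^ 2 = ∑ i, (v i : ℕ) ^ 2 := fun σ v =>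
    Equiv.sum_comp σ (fun i => ((v i : ℕ)) ^ 2)
  set P1 : (Fin 5 → ℕ+) → Prop := fun v => ∑ i, (v i : ℕ) ^ 2 = m with hP1
  set P2 : (Fin 5 → ℕ+) → Prop := fun v => P1 v ∧ v ∘ σ₁ = v with hP2
  set P3 : (Fin 5 → ℕ+) → Prop := fun v => P2 v ∧ v ∘ σ₂ = v with hP3
  set P4 : (Fin 5 → ℕ+) → Prop := fun v => P3 v ∧ v ∘ π = v with hP4
  haveI F1 : Finite {v // P1 v} := finite_of_sum (fun v h => h)
  haveI F2 : Finite {v // P2 v} := finite_of_sum (fun v h => h.1)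
  haveI F3 : Finite {v // P3 v} := finite_of_sum (fun v h => h.1.1)
  have step_a : Nat.card {v // P1 v} ≡ Nat.card {v // P2 v} [MOD 2] := by
    apply parity_subtype P1 (fun v => v ∘ σ₁)
    · intro v; funext x; exact congrArg v (inv1 x)
    · intro v hv; exact (hsum σ₁ v).trans hv
  have step_b : Nat.card {v // P2 v} ≡ Nat.card {v // P3 v} [MOD 2] := by
    apply parity_subtype P2 (fun v => v ∘ σ₂)
    · intro v; funext x; exact congrArg v (inv2 x)
    · intro v hv
      refine ⟨(hsum σ₂ v).trans hv.1, ?_⟩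
      funext x
      show v (σ₂ (σ₁ x)) = v (σ₂ x)
      rw [← comm1]
      exact congrFun hv.2 (σ₂ x)
  have step_c : Nat.card {v // P3 v} ≡ Nat.card {v // P4 v} [MOD 2] := by
    apply parity_subtype P3 (fun v => v ∘ π)
    · intro v; funext x; exact congrArg v (hππ x)
    · intro v hv
      refine ⟨⟨(hsum π v).trans hv.1.1, ?_⟩, ?_⟩
      · funext x
        show v (π (σ₁ x)) = v (π x)
        rw [comm2]
        exact congrFun hv.2 (π x)
      · funext x
        show v (π (σ₂ x)) = v (π x)
        rw [comm3]
        exact congrFun hv.1.2 (π x)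
  have final : Nat.card {v // P4 v}
      = Nat.card {p : ℕ+ × ℕ+ // 4 * (p.1 : ℕ) ^ 2 + (p.2 : ℕ) ^ 2 = m} := by
    apply Nat.card_congr
    refine Equiv.mk (fun v => ⟨(v.1 0, v.1 4), ?_⟩)
      (fun p => ⟨![p.1.1, p.1.1, p.1.1, p.1.1, p.1.2], ⟨⟨?_, ?_⟩, ?_⟩, ?_⟩) ?_ ?_
    · obtain ⟨v, ⟨⟨h1, e1⟩, e2⟩, e3⟩ := v
      have hv1 : v 1 = v 0 := by simpa [hσ₁] using congrFun e1 0
      have hv3 : v 3 = v 2 := by simpa [hσ₂] using congrFun e2 2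
      have hv2 : v 0 = v 2 := by
        simpa [show π 2 = 0 from by decide] using congrFun e3 2
      have hs : ∑ i, ((v i : ℕ))^2 = m := h1
      rw [Fin.sum_univ_five] at hs
      simp only [hv1, hv3, ← hv2] at hs
      show 4 * ((v 0 : ℕ))^2 + ((v 4 : ℕ))^2 = m
      omega
    · show ∑ i, ((![p.1.1, p.1.1, p.1.1, p.1.1, p.1.2] i : ℕ+) : ℕ) ^ 2 = m
      have hp : 4 * ((p.1.1 : ℕ))^2 + ((p.1.2 : ℕ))^2 = m := p.2
      rw [Fin.sum_univ_five]
      simp only [Matrix.cons_val_zero, Matrix.cons_val_one, Matrix.head_cons,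
        Matrix.cons_val_two, Matrix.tail_cons, Matrix.cons_val_three, Matrix.cons_val_four]
      omega
    · funext x; fin_cases x <;> rfl
    · funext x; fin_cases x <;> rfl
    · funext x; fin_cases x <;> rfl
    · rintro ⟨v, ⟨⟨h1, e1⟩, e2⟩, e3⟩
      have hv1 : v 1 = v 0 := by simpa [hσ₁] using congrFun e1 0
      have hv3 : v 3 = v 2 := by simpa [hσ₂] using congrFun e2 2
      have hv2 : v 0 = v 2 := by
        simpa [show π 2 = 0 from by decide] using congrFun e3 2
      apply Subtype.ext
      funext x
      fin_cases x <;> simp [hv1, hv3, ← hv2]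
    · rintro ⟨⟨a, e⟩, hp⟩
      rfl
  exact ((step_a.trans step_b).trans step_c).trans (by rw [final])


lemma sq_mod8 (x : ℕ) : x ^ 2 % 8 = 0 ∨ x ^ 2 % 8 = 1 ∨ x ^ 2 % 8 = 4 := by
  have h := Nat.pow_mod x 2 8
  have h8 : x % 8 < 8 := Nat.mod_lt _ (by norm_num)
  obtain ⟨r, hr, hxr⟩ : ∃ r, r < 8 ∧ x % 8 = r := ⟨_, h8, rfl⟩
  rw [hxr] at h
  interval_cases r <;> norm_num at h <;> omega

lemma even_of_sq_add_sq {x y n : ℕ} (h : x ^ 2 + y ^ 2 = n) (h4 : n % 4 = 0) :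
    x % 2 = 0 ∧ y % 2 = 0 := by
  have hx := Nat.pow_mod x 2 4
  have hy := Nat.pow_mod y 2 4
  have hx2 : x % 2 = x % 4 % 2 := (Nat.mod_mod_of_dvd x (by norm_num)).symm
  have hy2 : y % 2 = y % 4 % 2 := (Nat.mod_mod_of_dvd y (by norm_num)).symm
  obtain ⟨r, hr, hxr⟩ : ∃ r, r < 4 ∧ x % 4 = r := ⟨_, Nat.mod_lt _ (by norm_num), rfl⟩
  obtain ⟨s, hs, hys⟩ : ∃ s, s < 4 ∧ y % 4 = s := ⟨_, Nat.mod_lt _ (by norm_num), rfl⟩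
  rw [hxr] at hx hx2
  rw [hys] at hy hy2
  interval_cases r <;> interval_cases s <;> norm_num at hx hy hx2 hy2 <;> omega

lemma cardT4 (n : ℕ) :
    Nat.card {p : ℕ+ × ℕ+ // 4 * (p.1 : ℕ) ^ 2 + (p.2 : ℕ) ^ 2 = 4 * n}
      = Nat.card {p : ℕ+ × ℕ+ // (p.1 : ℕ) ^ 2 + (p.2 : ℕ) ^ 2 = n} := by
  symm
  apply Nat.card_eq_of_bijective (fun q => ⟨(q.1.1, 2 * q.1.2), by
    have hq : (q.1.1 : ℕ) ^ 2 + (q.1.2 : ℕ) ^ 2 = n := q.2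
    show 4 * (q.1.1 : ℕ) ^ 2 + ((2 * q.1.2 : ℕ+) : ℕ) ^ 2 = 4 * n
    have h2 : ((2 * q.1.2 : ℕ+) : ℕ) = 2 * (q.1.2 : ℕ) := by push_cast; ring
    rw [h2, mul_pow]
    norm_num
    omega⟩)
  constructor
  · intro q r h
    have h' := Subtype.ext_iff.mp h
    rw [Prod.ext_iff] at h'
    exact Subtype.ext (Prod.ext h'.1 (mul_left_cancel h'.2))
  · rintro ⟨⟨a, e⟩, hp⟩
    have hp' : 4 * (a : ℕ) ^ 2 + (e : ℕ) ^ 2 = 4 * n := hp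
    have hdvd : 2 ∣ (e : ℕ) := by
      refine Nat.Prime.dvd_of_dvd_pow (n := 2) Nat.prime_two ?_
      omega
    obtain ⟨c, hc⟩ := hdvd
    have hcpos : 0 < c := by
      have := e.pos
      omega
    have he2 : (e : ℕ) ^ 2 = 4 * c ^ 2 := by rw [hc]; ring
    have hsum : ((a : ℕ+) : ℕ) ^ 2 + ((⟨c, hcpos⟩ : ℕ+) : ℕ) ^ 2 = n := by
      show (a : ℕ) ^ 2 + c ^ 2 = n
      omega
    refine ⟨⟨(a, ⟨c, hcpos⟩), hsum⟩, ?_⟩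
    apply Subtype.ext
    show ((a : ℕ+), (2 * ⟨c, hcpos⟩ : ℕ+)) = ((a : ℕ+), e)
    exact Prod.ext rfl (PNat.coe_injective (by show 2 * c = (e : ℕ); omega))

lemma cardT_of_mod4 (n : ℕ) (h4 : n % 4 = 0) :
    Nat.card {p : ℕ+ × ℕ+ // 4 * (p.1 : ℕ) ^ 2 + (p.2 : ℕ) ^ 2 = n}
      = Nat.card {p : ℕ+ × ℕ+ // (p.1 : ℕ) ^ 2 + (p.2 : ℕ) ^ 2 = n} := by
  apply Nat.card_eq_of_bijective (fun q => ⟨(2 * q.1.1, q.1.2), by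
    have hq : 4 * (q.1.1 : ℕ) ^ 2 + (q.1.2 : ℕ) ^ 2 = n := q.2
    show ((2 * q.1.1 : ℕ+) : ℕ) ^ 2 + (q.1.2 : ℕ) ^ 2 = n
    have h2 : ((2 * q.1.1 : ℕ+) : ℕ) = 2 * (q.1.1 : ℕ) := by push_cast; ring
    rw [h2, mul_pow]
    norm_num
    omega⟩)
  constructor
  · intro q r h
    have h' := Subtype.ext_iff.mp h
    rw [Prod.ext_iff] at h'
    exact Subtype.ext (Prod.ext (mul_left_cancel h'.1) h'.2)
  · rintro ⟨⟨x, y⟩, hp⟩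
    have hp' : (x : ℕ) ^ 2 + (y : ℕ) ^ 2 = n := hp
    obtain ⟨hx, -⟩ := even_of_sq_add_sq hp' h4
    obtain ⟨c, hc⟩ : 2 ∣ (x : ℕ) := Nat.dvd_of_mod_eq_zero hx
    have hcpos : 0 < c := by
      have := x.pos
      omega
    have hx2 : (x : ℕ) ^ 2 = 4 * c ^ 2 := by rw [hc]; ring
    have hsum : 4 * ((⟨c, hcpos⟩ : ℕ+) : ℕ) ^ 2 + ((y : ℕ+) : ℕ) ^ 2 = n := by
      show 4 * c ^ 2 + (y : ℕ) ^ 2 = n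
      omega
    refine ⟨⟨(⟨c, hcpos⟩, y), hsum⟩, ?_⟩
    apply Subtype.ext
    show ((2 * ⟨c, hcpos⟩ : ℕ+), (y : ℕ+)) = ((x : ℕ+), y)
    exact Prod.ext (PNat.coe_injective (by show 2 * c = (x : ℕ); omega)) rfl

lemma T_empty (n : ℕ) (hn : n % 8 = 3 ∨ n % 8 = 6 ∨ n % 8 = 7) :
    Nat.card {p : ℕ+ × ℕ+ // 4 * (p.1 : ℕ) ^ 2 + (p.2 : ℕ) ^ 2 = n} = 0 := by
  rw [Nat.card_eq_zero]
  left
  constructor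
  rintro ⟨⟨a, e⟩, h⟩
  have h' : 4 * (a : ℕ) ^ 2 + (e : ℕ) ^ 2 = n := h
  have ha := sq_mod8 (a : ℕ)
  have he := sq_mod8 (e : ℕ)
  omega

lemma C_empty (n : ℕ) (hn : n % 8 = 3 ∨ n % 8 = 6 ∨ n % 8 = 7) :
    Nat.card {p : ℕ+ × ℕ+ // (p.1 : ℕ) ^ 2 + (p.2 : ℕ) ^ 2 = n} = 0 := by
  rw [Nat.card_eq_zero]
  left
  constructor
  rintro ⟨⟨x, y⟩, h⟩
  have h' : (x : ℕ) ^ 2 + (y : ℕ) ^ 2 = n := h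
  have hx := sq_mod8 (x : ℕ)
  have hy := sq_mod8 (y : ℕ)
  omega

theorem c5_four_mul_mod_two (n : ℕ) (hn : 0 < n)
    (h1 : n % 8 ≠ 1) (h2 : n % 8 ≠ 2) (h5 : n % 8 ≠ 5) :
    sqRep 5 (4 * n) ≡ sqRep 5 n [MOD 2] := by
  have k1 := step2 (4 * n)
  have k2 := step2 n
  have e1 := cardT4 n
  have e2 : Nat.card {p : ℕ+ × ℕ+ // 4 * (p.1 : ℕ) ^ 2 + (p.2 : ℕ) ^ 2 = n}
      = Nat.card {p : ℕ+ × ℕ+ // (p.1 : ℕ) ^ 2 + (p.2 : ℕ) ^ 2 = n} := by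
    by_cases h : n % 4 = 0
    · exact cardT_of_mod4 n h
    · have h8 : n % 8 = 3 ∨ n % 8 = 6 ∨ n % 8 = 7 := by omega
      rw [T_empty n h8, C_empty n h8]
  exact (k1.trans (by rw [e1, ← e2])).trans k2.symm
end

section
/- If the positive integer n satisfies n ≡ 0 (mod 4), then c₄(4n) ≡ c₄(n) (mod 8), c₅(4n) ≡ c₅(n) (mod 4), and c₆(4n) ≡ c₆(n) (mod 2). -/
private lemma sqmod (a : ℕ) : a^2 % 16 = (a%8)^2 % 16 := by
  conv_lhs => rw [← Nat.div_add_mod a 8]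
  have h : (8*(a/8) + a%8)^2 = 16*(4*(a/8)^2 + (a/8)*(a%8)) + (a%8)^2 := by ring
  rw [h, Nat.mul_add_mod]

private lemma key4 : ∀ a b c d : Fin 8,
    ((a:ℕ)^2 + (b:ℕ)^2 + (c:ℕ)^2 + (d:ℕ)^2) % 16 = 0 →
      (a:ℕ) % 2 = 0 ∧ (b:ℕ) % 2 = 0 ∧ (c:ℕ) % 2 = 0 ∧ (d:ℕ) % 2 = 0 := by decide

private lemma key5 : ∀ a b c : Fin 8,
    ((a:ℕ)^2 + 2*(b:ℕ)^2 + 2*(c:ℕ)^2) % 16 = 0 →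
      (a:ℕ) % 2 = 0 ∧ (b:ℕ) % 2 = 0 ∧ (c:ℕ) % 2 = 0 := by decide

private lemma key6 : ∀ a b c : Fin 8,
    ((a:ℕ)^2 + (b:ℕ)^2 + (c:ℕ)^2) % 8 = 0 →
      (a:ℕ) % 2 = 0 ∧ (b:ℕ) % 2 = 0 ∧ (c:ℕ) % 2 = 0 := by decide

private lemma key4' (a b c d : ℕ) (h : (a^2 + b^2 + c^2 + d^2) % 16 = 0) :
    a % 2 = 0 ∧ b % 2 = 0 ∧ c % 2 = 0 ∧ d % 2 = 0 := by
  have ha := sqmod a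
  have hb := sqmod b
  have hc := sqmod c
  have hd := sqmod d
  have key : ((a%8)^2 + (b%8)^2 + (c%8)^2 + (d%8)^2) % 16 = 0 →
      (a%8) % 2 = 0 ∧ (b%8) % 2 = 0 ∧ (c%8) % 2 = 0 ∧ (d%8) % 2 = 0 :=
    key4 ⟨a % 8, by omega⟩ ⟨b % 8, by omega⟩ ⟨c % 8, by omega⟩ ⟨d % 8, by omega⟩
  have := key (by omega)
  omega

private lemma key5' (a b c : ℕ) (h : (a^2 + 2*b^2 + 2*c^2) % 16 = 0) :
    a % 2 = 0 ∧ b % 2 = 0 ∧ c % 2 = 0 := by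
  have ha := sqmod a
  have hb := sqmod b
  have hc := sqmod c
  have key : ((a%8)^2 + 2*(b%8)^2 + 2*(c%8)^2) % 16 = 0 →
      (a%8) % 2 = 0 ∧ (b%8) % 2 = 0 ∧ (c%8) % 2 = 0 :=
    key5 ⟨a % 8, by omega⟩ ⟨b % 8, by omega⟩ ⟨c % 8, by omega⟩
  have := key (by omega)
  omega

private lemma key6' (a b c : ℕ) (h : (a^2 + b^2 + c^2) % 8 = 0) :
    a % 2 = 0 ∧ b % 2 = 0 ∧ c % 2 = 0 := by
  have ha := sqmod a
  have hb := sqmod b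
  have hc := sqmod c
  have key : ((a%8)^2 + (b%8)^2 + (c%8)^2) % 8 = 0 →
      (a%8) % 2 = 0 ∧ (b%8) % 2 = 0 ∧ (c%8) % 2 = 0 :=
    key6 ⟨a % 8, by omega⟩ ⟨b % 8, by omega⟩ ⟨c % 8, by omega⟩
  have := key (by omega)
  omega

private lemma two_dvd_aux {α : Type*} [DecidableEq α] (f : α → α)
    (hff : ∀ x, f (f x) = x) (hf : ∀ x, f x ≠ x) (s : Finset α) :
    (∀ x ∈ s, f x ∈ s) → 2 ∣ s.card := by
  induction s using Finset.strongInduction with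
  | _ s ih =>
    intro hcl
    rcases s.eq_empty_or_nonempty with rfl | ⟨x, hx⟩
    · simp
    · have hsub : ({x, f x} : Finset α) ⊆ s := by
        intro y hy
        rcases Finset.mem_insert.mp hy with rfl | hy
        · exact hx
        · rw [Finset.mem_singleton.mp hy]; exact hcl x hx
      have hne : x ≠ f x := fun h => hf x h.symm
      have hpair : ({x, f x} : Finset α).card = 2 := Finset.card_pair hne
      have hssub : s \ {x, f x} ⊂ s :=
        Finset.sdiff_ssubset hsub ⟨x, Finset.mem_insert_self _ _⟩
      have hclt : ∀ y ∈ s \ {x, f x}, f y ∈ s \ {x, f x} := by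
        intro y hy
        rw [Finset.mem_sdiff] at hy ⊢
        obtain ⟨hys, hyn⟩ := hy
        refine ⟨hcl y hys, fun hmem => hyn ?_⟩
        rcases Finset.mem_insert.mp hmem with h | h
        · have h2 : f (f y) = f x := congrArg f h
          rw [hff] at h2
          exact Finset.mem_insert.mpr (Or.inr (Finset.mem_singleton.mpr h2))
        · have h2 : f (f y) = f (f x) := congrArg f (Finset.mem_singleton.mp h)
          rw [hff, hff] at h2
          exact Finset.mem_insert.mpr (Or.inl h2)
      have hrec := ih _ hssub hclt
      have hcards : (s \ {x, f x}).card = s.card - 2 := by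
        rw [Finset.card_sdiff_of_subset hsub, hpair]
      have hle : 2 ≤ s.card := hpair ▸ Finset.card_le_card hsub
      omega

private lemma four_dvd_aux {α : Type*} [DecidableEq α] (f g : α → α)
    (hff : ∀ x, f (f x) = x) (hgg : ∀ x, g (g x) = x)
    (hcomm : ∀ x, f (g x) = g (f x))
    (hf : ∀ x, f x ≠ x) (hg : ∀ x, g x ≠ x) (hfg : ∀ x, f (g x) ≠ x) (s : Finset α) :
    (∀ x ∈ s, f x ∈ s ∧ g x ∈ s) → 4 ∣ s.card := by
  induction s using Finset.strongInduction with
  | _ s ih =>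
    intro hcl
    rcases s.eq_empty_or_nonempty with rfl | ⟨x, hx⟩
    · simp
    · have d1 : x ≠ f x := fun h => hf x h.symm
      have d2 : x ≠ g x := fun h => hg x h.symm
      have d3 : x ≠ f (g x) := fun h => hfg x h.symm
      have d4 : f x ≠ g x := fun h => hfg x (by rw [← h]; exact hff x)
      have d5 : f x ≠ f (g x) := fun h => hg x
        (by have h2 := congrArg f h; rw [hff, hff] at h2; exact h2.symm)
      have d6 : g x ≠ f (g x) := fun h => hf (g x) h.symm
      have hsub : ({x, f x, g x, f (g x)} : Finset α) ⊆ s := by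
        intro y hy
        simp only [Finset.mem_insert, Finset.mem_singleton] at hy
        rcases hy with rfl | rfl | rfl | rfl
        · exact hx
        · exact (hcl x hx).1
        · exact (hcl x hx).2
        · exact (hcl _ (hcl x hx).2).1
      have hcard4 : ({x, f x, g x, f (g x)} : Finset α).card = 4 := by
        rw [Finset.card_insert_of_notMem (by simp [d1, d2, d3]),
          Finset.card_insert_of_notMem (by simp [d4, d5]),
          Finset.card_pair d6]
      have hssub : s \ {x, f x, g x, f (g x)} ⊂ s :=
        Finset.sdiff_ssubset hsub ⟨x, Finset.mem_insert_self _ _⟩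
      have hclt : ∀ y ∈ s \ {x, f x, g x, f (g x)},
          f y ∈ s \ {x, f x, g x, f (g x)} ∧ g y ∈ s \ {x, f x, g x, f (g x)} := by
        intro y hy
        rw [Finset.mem_sdiff] at hy
        obtain ⟨hys, hyn⟩ := hy
        simp only [Finset.mem_insert, Finset.mem_singleton] at hyn
        push_neg at hyn
        obtain ⟨e1, e2, e3, e4⟩ := hyn
        constructor
        · rw [Finset.mem_sdiff]
          refine ⟨(hcl y hys).1, fun hmem => ?_⟩
          simp only [Finset.mem_insert, Finset.mem_singleton] at hmem
          rcases hmem with h | h | h | h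
          · exact e2 (by rw [← hff y, h])
          · exact e1 (by have h2 := congrArg f h; rwa [hff, hff] at h2)
          · exact e4 (by rw [← hff y, h])
          · exact e3 (by have h2 := congrArg f h; rwa [hff, hff] at h2)
        · rw [Finset.mem_sdiff]
          refine ⟨(hcl y hys).2, fun hmem => ?_⟩
          simp only [Finset.mem_insert, Finset.mem_singleton] at hmem
          rcases hmem with h | h | h | h
          · exact e3 (by rw [← hgg y, h])
          · exact e4 (by have h2 := congrArg g h; rw [hgg, ← hcomm] at h2; exact h2)
          · exact e1 (by have h2 := congrArg g h; rwa [hgg, hgg] at h2)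
          · exact e2 (by
              have h2 := congrArg g h
              rw [hgg] at h2
              rw [h2, ← hcomm, hgg])
      have hrec := ih _ hssub hclt
      have hcards : (s \ {x, f x, g x, f (g x)}).card = s.card - 4 := by
        rw [Finset.card_sdiff_of_subset hsub, hcard4]
      have hle : 4 ≤ s.card := hcard4 ▸ Finset.card_le_card hsub
      omega

private lemma two_dvd_card {α : Type*} [Fintype α] [DecidableEq α] (f : α → α)
    (hff : ∀ x, f (f x) = x) (hf : ∀ x, f x ≠ x) : 2 ∣ Fintype.card α := by
  rw [← Finset.card_univ]
  exact two_dvd_aux f hff hf Finset.univ (fun x _ => Finset.mem_univ _)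

private lemma four_dvd_card {α : Type*} [Fintype α] [DecidableEq α] (f g : α → α)
    (hff : ∀ x, f (f x) = x) (hgg : ∀ x, g (g x) = x)
    (hcomm : ∀ x, f (g x) = g (f x))
    (hf : ∀ x, f x ≠ x) (hg : ∀ x, g x ≠ x) (hfg : ∀ x, f (g x) ≠ x) :
    4 ∣ Fintype.card α := by
  rw [← Finset.card_univ]
  exact four_dvd_aux f g hff hgg hcomm hf hg hfg Finset.univ
    (fun x _ => ⟨Finset.mem_univ _, Finset.mem_univ _⟩)
private instance finite_sol_s18 (k N : ℕ) : Finite {v : Fin k → ℕ+ // ∑ i, (v i : ℕ)^2 = N} := by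
  have hb : ∀ v : {v : Fin k → ℕ+ // ∑ i, (v i : ℕ)^2 = N}, ∀ i, (v.1 i : ℕ) < N + 1 := by
    intro v i
    have h1 : (v.1 i : ℕ) ≤ (v.1 i : ℕ)^2 := Nat.le_self_pow two_ne_zero _
    have h2 : (v.1 i : ℕ)^2 ≤ ∑ j, (v.1 j : ℕ)^2 :=
      Finset.single_le_sum (f := fun j => ((v.1 j : ℕ))^2)
        (fun j _ => Nat.zero_le _) (Finset.mem_univ i)
    have h3 := v.2
    omega
  apply Finite.of_injective (fun v i => (⟨(v.1 i : ℕ), hb v i⟩ : Fin (N+1)))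
  intro v w h
  apply Subtype.ext
  funext i
  have h2 := congrFun h i
  simp only [Fin.mk.injEq] at h2
  exact PNat.coe_injective h2

private lemma finite_and (k N : ℕ) (Q : (Fin k → ℕ+) → Prop) :
    Finite {v : Fin k → ℕ+ // (∑ i, (v i : ℕ)^2 = N) ∧ Q v} :=
  Finite.of_injective
    (fun v => (⟨v.1, v.2.1⟩ : {v : Fin k → ℕ+ // ∑ i, (v i : ℕ)^2 = N}))
    (by
      intro v w h
      apply Subtype.ext
      have h2 := congrArg Subtype.val h
      exact h2)

private def flatten {α : Type*} (p q : α → Prop) :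
    {x : {a // p a} // q x.1} ≃ {a // p a ∧ q a} :=
  ⟨fun x => ⟨x.1.1, x.1.2, x.2⟩, fun v => ⟨⟨v.1, v.2.1⟩, v.2.2⟩,
    fun _ => rfl, fun _ => rfl⟩

private lemma split (k N : ℕ) :
    sqRep k N
      = Nat.card {v : Fin k → ℕ+ // (∑ i, (v i : ℕ)^2 = N) ∧ ∀ i, (v i : ℕ) % 2 = 0}
        + Nat.card {v : Fin k → ℕ+ // (∑ i, (v i : ℕ)^2 = N) ∧ ¬ ∀ i, (v i : ℕ) % 2 = 0} := by
  classical
  haveI := finite_and k N (fun v => ∀ i, (v i : ℕ) % 2 = 0)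
  haveI := finite_and k N (fun v => ¬ ∀ i, (v i : ℕ) % 2 = 0)
  rw [sqRep, ← Nat.card_sum]
  apply Nat.card_congr
  exact ((Equiv.sumCompl (fun x : {v : Fin k → ℕ+ // ∑ i, (v i : ℕ)^2 = N} =>
      ∀ i, (x.1 i : ℕ) % 2 = 0)).symm).trans
    (Equiv.sumCongr
      (flatten (fun v : Fin k → ℕ+ => ∑ i, (v i : ℕ)^2 = N) (fun v => ∀ i, (v i : ℕ) % 2 = 0))
      (flatten (fun v : Fin k → ℕ+ => ∑ i, (v i : ℕ)^2 = N) (fun v => ¬ ∀ i, (v i : ℕ) % 2 = 0)))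

private lemma card_even_part (k n : ℕ) :
    Nat.card {v : Fin k → ℕ+ // (∑ i, (v i : ℕ)^2 = 4*n) ∧ ∀ i, (v i : ℕ) % 2 = 0}
      = sqRep k n := by
  rw [sqRep]
  apply Nat.card_congr
  apply Equiv.symm
  have hbij : Function.Bijective
      (fun w : {v : Fin k → ℕ+ // ∑ i, (v i : ℕ)^2 = n} =>
        (⟨fun i => 2 * w.1 i, by
            have hco : ∀ i, ((2 * w.1 i : ℕ+) : ℕ) = 2 * (w.1 i : ℕ) := by
              intro i
              rw [PNat.mul_coe]
              rfl
            constructor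
            · have hsq : ∀ i, ((2 * w.1 i : ℕ+) : ℕ)^2 = 4 * (w.1 i : ℕ)^2 := by
                intro i
                rw [hco i]
                ring
              rw [Finset.sum_congr rfl (fun i _ => hsq i), ← Finset.mul_sum, w.2]
            · intro i
              rw [hco i]
              omega⟩ :
          {v : Fin k → ℕ+ // (∑ i, (v i : ℕ)^2 = 4*n) ∧ ∀ i, (v i : ℕ) % 2 = 0})) := by
    constructor
    · intro a b h
      apply Subtype.ext
      funext i
      have h2 := congrFun (congrArg Subtype.val h) i
      exact mul_left_cancel h2
    · rintro ⟨v, hsum, hev⟩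
      have hpos : ∀ i, 0 < (v i : ℕ) / 2 := by
        intro i
        have h1 := (v i).pos
        have h2 := hev i
        omega
      have hkey : ∀ i, 2 * ((v i : ℕ) / 2) = (v i : ℕ) := by
        intro i
        have := hev i
        omega
      refine ⟨⟨fun i => ⟨(v i : ℕ) / 2, hpos i⟩, ?_⟩, ?_⟩
      · show ∑ i, ((v i : ℕ) / 2)^2 = n
        have h4 : 4 * ∑ i, ((v i : ℕ)/2)^2 = 4 * n := by
          rw [← hsum, Finset.mul_sum]
          apply Finset.sum_congr rfl
          intro i _
          conv_rhs => rw [← hkey i]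
          ring
        omega
      · apply Subtype.ext
        funext i
        apply PNat.coe_injective
        rw [PNat.mul_coe]
        exact hkey i
  exact Equiv.ofBijective _ hbij

private def remap {k N : ℕ} (σ : Fin k → Fin k) (hσ : Function.Bijective σ)
    (x : {v : Fin k → ℕ+ // (∑ i, (v i : ℕ)^2 = N) ∧ ¬ ∀ i, (v i : ℕ) % 2 = 0}) :
    {v : Fin k → ℕ+ // (∑ i, (v i : ℕ)^2 = N) ∧ ¬ ∀ i, (v i : ℕ) % 2 = 0} :=
  ⟨fun i => x.1 (σ i), by
    constructor
    · exact (Fintype.sum_bijective σ hσ _ _ (fun i => rfl)).trans x.2.1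
    · intro hall
      apply x.2.2
      intro i
      obtain ⟨j, rfl⟩ := hσ.surjective i
      exact hall j⟩

private lemma comp4 (n : ℕ) (h16 : (4*n) % 16 = 0) :
    Nat.card {v : Fin 4 → ℕ+ // (∑ i, (v i : ℕ)^2 = 4*n) ∧ ¬ ∀ i, (v i : ℕ) % 2 = 0} = 0 := by
  rw [Nat.card_eq_zero]
  left
  refine ⟨fun x => ?_⟩
  obtain ⟨v, hsum, hodd⟩ := x
  rw [Fin.sum_univ_four] at hsum
  have h := key4' (v 0 : ℕ) (v 1 : ℕ) (v 2 : ℕ) (v 3 : ℕ) (by omega)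
  apply hodd
  intro i
  fin_cases i
  · exact h.1
  · exact h.2.1
  · exact h.2.2.1
  · exact h.2.2.2

private lemma comp5 (n : ℕ) (h16 : (4*n) % 16 = 0) :
    4 ∣ Nat.card {v : Fin 5 → ℕ+ // (∑ i, (v i : ℕ)^2 = 4*n) ∧ ¬ ∀ i, (v i : ℕ) % 2 = 0} := by
  haveI := finite_and 5 (4*n) (fun v => ¬ ∀ i, (v i : ℕ) % 2 = 0)
  haveI := Fintype.ofFinite
    {v : Fin 5 → ℕ+ // (∑ i, (v i : ℕ)^2 = 4*n) ∧ ¬ ∀ i, (v i : ℕ) % 2 = 0}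
  rw [Nat.card_eq_fintype_card]
  have hbf : Function.Bijective (![0,2,1,4,3] : Fin 5 → Fin 5) := by decide
  have hbg : Function.Bijective (![0,3,4,1,2] : Fin 5 → Fin 5) := by decide
  apply four_dvd_card (remap (N := 4*n) ![0,2,1,4,3] hbf) (remap (N := 4*n) ![0,3,4,1,2] hbg)
  · intro x
    apply Subtype.ext
    funext i
    show x.1 (![0,2,1,4,3] (![0,2,1,4,3] i)) = x.1 i
    congr 1
    fin_cases i <;> rfl
  · intro x
    apply Subtype.ext
    funext i
    show x.1 (![0,3,4,1,2] (![0,3,4,1,2] i)) = x.1 i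
    congr 1
    fin_cases i <;> rfl
  · intro x
    apply Subtype.ext
    funext i
    show x.1 (![0,3,4,1,2] (![0,2,1,4,3] i)) = x.1 (![0,2,1,4,3] (![0,3,4,1,2] i))
    congr 1
    fin_cases i <;> rfl
  · -- F has no fixed point
    intro x h
    have hv := congrArg Subtype.val h
    have e1 : x.1 2 = x.1 1 := congrFun hv 1
    have e2 : x.1 4 = x.1 3 := congrFun hv 3
    have e1' : ((x.1 2 : ℕ)) = (x.1 1 : ℕ) := congrArg _ e1
    have e2' : ((x.1 4 : ℕ)) = (x.1 3 : ℕ) := congrArg _ e2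
    have hsum := x.2.1
    rw [Fin.sum_univ_five] at hsum
    have f1 : ((x.1 2 : ℕ))^2 = (x.1 1 : ℕ)^2 := by rw [e1']
    have f2 : ((x.1 4 : ℕ))^2 = (x.1 3 : ℕ)^2 := by rw [e2']
    have hkey := key5' (x.1 0 : ℕ) (x.1 1 : ℕ) (x.1 3 : ℕ) (by omega)
    have p2 : ((x.1 2 : ℕ)) % 2 = 0 := by
      have := hkey.2.1; omega
    have p4 : ((x.1 4 : ℕ)) % 2 = 0 := by
      have := hkey.2.2; omega
    apply x.2.2
    intro i
    fin_cases i
    · exact hkey.1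
    · exact hkey.2.1
    · exact p2
    · exact hkey.2.2
    · exact p4
  · -- G has no fixed point
    intro x h
    have hv := congrArg Subtype.val h
    have e1 : x.1 3 = x.1 1 := congrFun hv 1
    have e2 : x.1 4 = x.1 2 := congrFun hv 2
    have e1' : ((x.1 3 : ℕ)) = (x.1 1 : ℕ) := congrArg _ e1
    have e2' : ((x.1 4 : ℕ)) = (x.1 2 : ℕ) := congrArg _ e2
    have hsum := x.2.1
    rw [Fin.sum_univ_five] at hsum
    have f1 : ((x.1 3 : ℕ))^2 = (x.1 1 : ℕ)^2 := by rw [e1']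
    have f2 : ((x.1 4 : ℕ))^2 = (x.1 2 : ℕ)^2 := by rw [e2']
    have hkey := key5' (x.1 0 : ℕ) (x.1 1 : ℕ) (x.1 2 : ℕ) (by omega)
    have p3 : ((x.1 3 : ℕ)) % 2 = 0 := by
      have := hkey.2.1; omega
    have p4 : ((x.1 4 : ℕ)) % 2 = 0 := by
      have := hkey.2.2; omega
    apply x.2.2
    intro i
    fin_cases i
    · exact hkey.1
    · exact hkey.2.1
    · exact hkey.2.2
    · exact p3
    · exact p4
  · -- F ∘ G has no fixed point
    intro x h
    have hv := congrArg Subtype.val h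
    have e1 : x.1 4 = x.1 1 := congrFun hv 1
    have e2 : x.1 3 = x.1 2 := congrFun hv 2
    have e1' : ((x.1 4 : ℕ)) = (x.1 1 : ℕ) := congrArg _ e1
    have e2' : ((x.1 3 : ℕ)) = (x.1 2 : ℕ) := congrArg _ e2
    have hsum := x.2.1
    rw [Fin.sum_univ_five] at hsum
    have f1 : ((x.1 4 : ℕ))^2 = (x.1 1 : ℕ)^2 := by rw [e1']
    have f2 : ((x.1 3 : ℕ))^2 = (x.1 2 : ℕ)^2 := by rw [e2']
    have hkey := key5' (x.1 0 : ℕ) (x.1 1 : ℕ) (x.1 2 : ℕ) (by omega)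
    have p3 : ((x.1 3 : ℕ)) % 2 = 0 := by
      have := hkey.2.2; omega
    have p4 : ((x.1 4 : ℕ)) % 2 = 0 := by
      have := hkey.2.1; omega
    apply x.2.2
    intro i
    fin_cases i
    · exact hkey.1
    · exact hkey.2.1
    · exact hkey.2.2
    · exact p3
    · exact p4

private lemma comp6 (n : ℕ) (h16 : (4*n) % 16 = 0) :
    2 ∣ Nat.card {v : Fin 6 → ℕ+ // (∑ i, (v i : ℕ)^2 = 4*n) ∧ ¬ ∀ i, (v i : ℕ) % 2 = 0} := by
  haveI := finite_and 6 (4*n) (fun v => ¬ ∀ i, (v i : ℕ) % 2 = 0)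
  haveI := Fintype.ofFinite
    {v : Fin 6 → ℕ+ // (∑ i, (v i : ℕ)^2 = 4*n) ∧ ¬ ∀ i, (v i : ℕ) % 2 = 0}
  rw [Nat.card_eq_fintype_card]
  have hbf : Function.Bijective (![1,0,3,2,5,4] : Fin 6 → Fin 6) := by decide
  apply two_dvd_card (remap (N := 4*n) ![1,0,3,2,5,4] hbf)
  · intro x
    apply Subtype.ext
    funext i
    show x.1 (![1,0,3,2,5,4] (![1,0,3,2,5,4] i)) = x.1 i
    congr 1
    fin_cases i <;> rfl
  · intro x h
    have hv := congrArg Subtype.val h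
    have e1 : x.1 1 = x.1 0 := congrFun hv 0
    have e2 : x.1 3 = x.1 2 := congrFun hv 2
    have e3 : x.1 5 = x.1 4 := congrFun hv 4
    have e1' : ((x.1 1 : ℕ)) = (x.1 0 : ℕ) := congrArg _ e1
    have e2' : ((x.1 3 : ℕ)) = (x.1 2 : ℕ) := congrArg _ e2
    have e3' : ((x.1 5 : ℕ)) = (x.1 4 : ℕ) := congrArg _ e3
    have hsum := x.2.1
    rw [Fin.sum_univ_six] at hsum
    have f1 : ((x.1 1 : ℕ))^2 = (x.1 0 : ℕ)^2 := by rw [e1']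
    have f2 : ((x.1 3 : ℕ))^2 = (x.1 2 : ℕ)^2 := by rw [e2']
    have f3 : ((x.1 5 : ℕ))^2 = (x.1 4 : ℕ)^2 := by rw [e3']
    have hkey := key6' (x.1 0 : ℕ) (x.1 2 : ℕ) (x.1 4 : ℕ) (by omega)
    have p1 : ((x.1 1 : ℕ)) % 2 = 0 := by
      have := hkey.1; omega
    have p3 : ((x.1 3 : ℕ)) % 2 = 0 := by
      have := hkey.2.1; omega
    have p5 : ((x.1 5 : ℕ)) % 2 = 0 := by
      have := hkey.2.2; omega
    apply x.2.2
    intro i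
    fin_cases i
    · exact hkey.1
    · exact p1
    · exact hkey.2.1
    · exact p3
    · exact hkey.2.2
    · exact p5

theorem c456_four_mul (n : ℕ) (hn : 0 < n) (h4 : n % 4 = 0) :
    sqRep 4 (4 * n) ≡ sqRep 4 n [MOD 8] ∧
      sqRep 5 (4 * n) ≡ sqRep 5 n [MOD 4] ∧
        sqRep 6 (4 * n) ≡ sqRep 6 n [MOD 2] := by
  have h16 : (4*n) % 16 = 0 := by omega
  refine ⟨?_, ?_, ?_⟩
  · have hs := split 4 (4*n)
    rw [card_even_part, comp4 n h16] at hs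
    rw [hs]
    simp [Nat.ModEq.refl]
  · have hs := split 5 (4*n)
    rw [card_even_part] at hs
    obtain ⟨t, ht⟩ := comp5 n h16
    rw [ht] at hs
    rw [hs]
    exact Nat.add_mul_mod_self_left (sqRep 5 n) 4 t
  · have hs := split 6 (4*n)
    rw [card_even_part] at hs
    obtain ⟨t, ht⟩ := comp6 n h16
    rw [ht] at hs
    rw [hs]
    exact Nat.add_mul_mod_self_left (sqRep 6 n) 2 t
end
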